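/- The two-element null semigroup N₂ does not lift: there is a finite semigroup S and a surjective semigroup homomorphism φ : S → N₂ such that no subsemigroup of S is isomorphic to N₂. Concretely, one may take S to be the monogenic semigroup ⟨y | y² = y⁴⟩ (elements y, y², y³ with y⁴ = y²) with φ(y) = n, φ(y²) = φ(y³) = 0, where N₂ = {n, 0} with all products equal to 0. -/

import Mathlib

/-- The two-element null semigroup `N₂ = {n, 0}`, all products equal to `0`. -/
inductive N2 : Type
  | n : N2
  | zero : N2
deriving DecidableEq

instance : Fintype N2 where
  elems := {N2.n, N2.zero}
  complete := by intro x; cases x <;> simp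

instance : Mul N2 := ⟨fun _ _ => N2.zero⟩

instance : Semigroup N2 where
  mul_assoc _ _ _ := rfl

/-- The monogenic semigroup `⟨y ∣ y² = y⁴⟩` with elements `y, y², y³`. -/
inductive M3 : Type
  | y : M3
  | y2 : M3
  | y3 : M3
deriving DecidableEq

instance : Fintype M3 where
  elems := {M3.y, M3.y2, M3.y3}
  complete := by intro x; cases x <;> simp

instance : Mul M3 :=
  ⟨fun a b =>
    match a, b with
    | M3.y, M3.y => M3.y2
    | M3.y, M3.y2 => M3.y3
    | M3.y, M3.y3 => M3.y2
    | M3.y2, M3.y => M3.y3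
    | M3.y2, M3.y2 => M3.y2
    | M3.y2, M3.y3 => M3.y3
    | M3.y3, M3.y => M3.y2
    | M3.y3, M3.y2 => M3.y3
    | M3.y3, M3.y3 => M3.y2⟩

instance : Semigroup M3 where
  mul_assoc := by decide

/-- `N₂` does not lift: there is a surjective homomorphism from the finite semigroup
`⟨y ∣ y² = y⁴⟩` onto `N₂` (sending `y ↦ n` and `y², y³ ↦ 0`) whose domain has no
subsemigroup isomorphic to `N₂`. -/
theorem N2_does_not_lift :
    Finite M3 ∧
      ∃ φ : M3 →ₙ* N2,
        (φ M3.y = N2.n ∧ φ M3.y2 = N2.zero ∧ φ M3.y3 = N2.zero) ∧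
        Function.Surjective φ ∧
        ∀ T : Subsemigroup M3, ¬ Nonempty (T ≃* N2) := by
  refine ⟨Finite.of_fintype _, ⟨fun m => match m with
      | M3.y => N2.n | M3.y2 => N2.zero | M3.y3 => N2.zero, by decide⟩,
    ⟨rfl, rfl, rfl⟩, ?_, ?_⟩
  · intro x
    cases x
    · exact ⟨M3.y, rfl⟩
    · exact ⟨M3.y2, rfl⟩
  · rintro T ⟨e⟩
    set a := e.symm N2.n with ha
    set b := e.symm N2.zero with hb
    have key : ∀ x y : M3, ¬(x * x = y ∧ x * y = y ∧ x ≠ y) := by decide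
    refine key a.1 b.1 ⟨?_, ?_, ?_⟩
    · have : a * a = b := by
        rw [ha, hb, ← map_mul]
        rfl
      exact congrArg Subtype.val this
    · have : a * b = b := by
        rw [ha, hb, ← map_mul]
        rfl
      exact congrArg Subtype.val this
    · intro h
      have := e.symm.injective (Subtype.ext h : a = b)
      exact N2.noConfusion this
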